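/- Assume A_m ≠ 0 and D_k ≠ 0, and set N = mn + kr. Then the set 𝕍 = {(𝕏, 𝕐) ∈ ℂ^{N×N} × ℂ^{N×N} : there exist v ∈ ℂ^m and w ∈ ℂ^k such that λ𝕏+𝕐 is in 𝕃₁(G) with ansatz vectors (v, w)} is a ℂ-linear subspace of ℂ^{N×N} × ℂ^{N×N} of dimension m + m(m−1)n² + k + k(k−1)r². -/

import Mathlib

open Matrix Finset

noncomputable section

/-- `Λ_{p-1}(λ) = (λ^{p-1}, …, λ, 1)ᵀ` as a vector in `ℂ^p`. -/
def Lam (p : ℕ) (lam : ℂ) : Fin p → ℂ := fun i => lam ^ (p - 1 - (i : ℕ))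

/-- the standard basis vector of `ℂ^a` with a `1` in (0-indexed) position `j`. -/
def eVec (a j : ℕ) : Fin a → ℂ := fun i => if (i : ℕ) = j then 1 else 0

/-- evaluation at `lam` of the matrix polynomial with coefficients `Pc 0, …, Pc d`. -/
def polyEval {d n : ℕ} (Pc : Fin (d + 1) → Matrix (Fin n) (Fin n) ℂ) (lam : ℂ) :
    Matrix (Fin n) (Fin n) ℂ := ∑ j : Fin (d + 1), lam ^ (j : ℕ) • Pc j

/-- Kronecker product `v ⊗ M` of a column vector `v ∈ ℂ^a` with a matrix `M`. -/
def vKron {a : ℕ} {α β : Type*} (v : Fin a → ℂ) (M : Matrix α β ℂ) :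
    Matrix (Fin a × α) β ℂ := fun i j => v i.1 * M i.2 j

/-- Kronecker product `vᵀ ⊗ M` of a row vector with a matrix `M`. -/
def rKron {a : ℕ} {α β : Type*} (v : Fin a → ℂ) (M : Matrix α β ℂ) :
    Matrix α (Fin a × β) ℂ := fun i j => v j.1 * M i j.2

/-- Kronecker product `v wᵀ ⊗ M`. -/
def oKron {a b : ℕ} {α β : Type*} (v : Fin a → ℂ) (w : Fin b → ℂ) (M : Matrix α β ℂ) :
    Matrix (Fin a × α) (Fin b × β) ℂ := fun i j => v i.1 * w j.1 * M i.2 j.2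

/-- the pencil `λX + Y` is in `L₁(P)` with right ansatz vector `v`. -/
def InL1 {d n : ℕ} (Pc : Fin (d + 1) → Matrix (Fin n) (Fin n) ℂ)
    (X Y : Matrix (Fin d × Fin n) (Fin d × Fin n) ℂ) (v : Fin d → ℂ) : Prop :=
  ∀ lam : ℂ, (lam • X + Y) * vKron (Lam d lam) (1 : Matrix (Fin n) (Fin n) ℂ)
      = vKron v (polyEval Pc lam)

/-- the pencil `λX + Y` is in `L₂(P)` with left ansatz vector `s`. -/
def InL2 {d n : ℕ} (Pc : Fin (d + 1) → Matrix (Fin n) (Fin n) ℂ)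
    (X Y : Matrix (Fin d × Fin n) (Fin d × Fin n) ℂ) (s : Fin d → ℂ) : Prop :=
  ∀ lam : ℂ, rKron (Lam d lam) (1 : Matrix (Fin n) (Fin n) ℂ) * (lam • X + Y)
      = rKron s (polyEval Pc lam)

/-- the pencil `λ𝕏 + 𝕐` is in `𝕃₁(G)` with ansatz vectors `(v, w)`. -/
def InBL1 {m k n r : ℕ} (Ac : Fin (m + 1) → Matrix (Fin n) (Fin n) ℂ)
    (Dc : Fin (k + 1) → Matrix (Fin r) (Fin r) ℂ)
    (B : Matrix (Fin n) (Fin r) ℂ) (C : Matrix (Fin r) (Fin n) ℂ)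
    (XX YY : Matrix ((Fin m × Fin n) ⊕ (Fin k × Fin r)) ((Fin m × Fin n) ⊕ (Fin k × Fin r)) ℂ)
    (v : Fin m → ℂ) (w : Fin k → ℂ) : Prop :=
  ∃ (X Y : Matrix (Fin m × Fin n) (Fin m × Fin n) ℂ)
    (P Q : Matrix (Fin k × Fin r) (Fin k × Fin r) ℂ),
      InL1 Ac X Y v ∧ InL1 Dc P Q w ∧
      XX = Matrix.fromBlocks X 0 0 P ∧
      YY = Matrix.fromBlocks Y (-(oKron v (eVec k (k - 1)) B)) (oKron w (eVec m (m - 1)) C) Q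

/-- the pencil `λ𝕏 + 𝕐` is in `𝕃₂(G)` with ansatz vectors `(s, z)`. -/
def InBL2 {m k n r : ℕ} (Ac : Fin (m + 1) → Matrix (Fin n) (Fin n) ℂ)
    (Dc : Fin (k + 1) → Matrix (Fin r) (Fin r) ℂ)
    (B : Matrix (Fin n) (Fin r) ℂ) (C : Matrix (Fin r) (Fin n) ℂ)
    (XX YY : Matrix ((Fin m × Fin n) ⊕ (Fin k × Fin r)) ((Fin m × Fin n) ⊕ (Fin k × Fin r)) ℂ)
    (s : Fin m → ℂ) (z : Fin k → ℂ) : Prop :=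
  ∃ (X Y : Matrix (Fin m × Fin n) (Fin m × Fin n) ℂ)
    (P Q : Matrix (Fin k × Fin r) (Fin k × Fin r) ℂ),
      InL2 Ac X Y s ∧ InL2 Dc P Q z ∧
      XX = Matrix.fromBlocks X 0 0 P ∧
      YY = Matrix.fromBlocks Y (-(oKron (eVec m (m - 1)) z B)) (oKron (eVec k (k - 1)) s C) Q

/-- the transfer function `G(λ) = D(λ) + C A(λ)⁻¹ B`. -/
def Gmat {m k n r : ℕ} (Ac : Fin (m + 1) → Matrix (Fin n) (Fin n) ℂ)
    (Dc : Fin (k + 1) → Matrix (Fin r) (Fin r) ℂ)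
    (B : Matrix (Fin n) (Fin r) ℂ) (C : Matrix (Fin r) (Fin n) ℂ) (lam : ℂ) :
    Matrix (Fin r) (Fin r) ℂ :=
  polyEval Dc lam + C * (polyEval Ac lam)⁻¹ * B

lemma extract {N : ℕ} (c : ℕ → ℂ)
    (h : ∀ lam : ℂ, ∑ p ∈ Finset.range N, c p * lam ^ p = 0) :
    ∀ p < N, c p = 0 := by
  intro p hp
  have hq : (∑ q ∈ Finset.range N, Polynomial.C (c q) * Polynomial.X ^ q : Polynomial ℂ) = 0 := by
    apply Polynomial.funext
    intro x
    simpa [Polynomial.eval_finset_sum] using h x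
  have h2 := congrArg (fun f : Polynomial ℂ => f.coeff p) hq
  simp only [Polynomial.finset_sum_coeff, Polynomial.coeff_C_mul, Polynomial.coeff_X_pow,
    Polynomial.coeff_zero, mul_ite, mul_one, mul_zero] at h2
  rwa [Finset.sum_ite_eq (Finset.range N) p c, if_pos (Finset.mem_range.2 hp)] at h2

lemma key_sum (d : ℕ) (Xe Ye : ℕ → ℂ) (lam : ℂ) :
    ∑ j ∈ Finset.range d, (lam * Xe j + Ye j) * lam ^ (d - 1 - j)
      = ∑ p ∈ Finset.range (d + 1),
          ((if 1 ≤ p then Xe (d - p) else 0) + (if p < d then Ye (d - 1 - p) else 0)) * lam ^ p := by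
  have hX : ∑ j ∈ Finset.range d, (lam * Xe j) * lam ^ (d - 1 - j)
      = ∑ p ∈ Finset.range (d + 1), (if 1 ≤ p then Xe (d - p) else 0) * lam ^ p := by
    rw [Finset.sum_range_succ']
    have h0 : (if 1 ≤ (0:ℕ) then Xe (d - 0) else 0) * lam ^ 0 = 0 := by simp
    rw [h0, add_zero]
    rw [← Finset.sum_range_reflect (fun j => (lam * Xe j) * lam ^ (d - 1 - j)) d]
    apply Finset.sum_congr rfl
    intro j hj
    rw [Finset.mem_range] at hj
    rw [if_pos (by omega : 1 ≤ j + 1)]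
    rw [show d - 1 - (d - 1 - j) = j from by omega, show d - (j+1) = d - 1 - j from by omega]
    ring
  have hY : ∑ j ∈ Finset.range d, Ye j * lam ^ (d - 1 - j)
      = ∑ p ∈ Finset.range (d + 1), (if p < d then Ye (d - 1 - p) else 0) * lam ^ p := by
    rw [Finset.sum_range_succ, if_neg (by omega : ¬ d < d), zero_mul, add_zero]
    rw [← Finset.sum_range_reflect (fun j => Ye j * lam ^ (d - 1 - j)) d]
    apply Finset.sum_congr rfl
    intro j hj
    rw [Finset.mem_range] at hj
    rw [if_pos hj, show d - 1 - (d - 1 - j) = j from by omega]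
  calc ∑ j ∈ Finset.range d, (lam * Xe j + Ye j) * lam ^ (d - 1 - j)
      = ∑ j ∈ Finset.range d, ((lam * Xe j) * lam ^ (d - 1 - j) + Ye j * lam ^ (d - 1 - j)) := by
        apply Finset.sum_congr rfl; intros; ring
    _ = _ := by rw [Finset.sum_add_distrib, hX, hY, ← Finset.sum_add_distrib]
                apply Finset.sum_congr rfl; intros; ring

lemma seq_iff {d : ℕ} (hd : 1 ≤ d) (Xn Yn : Fin d → ℂ) (An : Fin (d + 1) → ℂ) :
    (∀ lam : ℂ, ∑ j : Fin d, (lam * Xn j + Yn j) * lam ^ (d - 1 - (j : ℕ))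
        = ∑ t : Fin (d + 1), lam ^ (t : ℕ) * An t)
    ↔ (Xn ⟨0, hd⟩ = An (Fin.last d) ∧
        ∀ j : Fin d, Yn j = An ⟨d - 1 - (j : ℕ), by omega⟩
          - (if h : (j : ℕ) + 1 < d then Xn ⟨(j : ℕ) + 1, h⟩ else 0)) := by
  classical
  set Xe : ℕ → ℂ := fun t => if h : t < d then Xn ⟨t, h⟩ else 0 with hXe
  set Ye : ℕ → ℂ := fun t => if h : t < d then Yn ⟨t, h⟩ else 0 with hYe
  set Ae : ℕ → ℂ := fun t => if h : t < d + 1 then An ⟨t, h⟩ else 0 with hAe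
  set Cf : ℕ → ℂ := fun p => ((if 1 ≤ p then Xe (d - p) else 0)
      + (if p < d then Ye (d - 1 - p) else 0)) - Ae p with hCf
  have hL : ∀ lam : ℂ, ∑ j : Fin d, (lam * Xn j + Yn j) * lam ^ (d - 1 - (j:ℕ))
      = ∑ j ∈ Finset.range d, (lam * Xe j + Ye j) * lam ^ (d - 1 - j) := by
    intro lam
    rw [← Fin.sum_univ_eq_sum_range (fun j => (lam * Xe j + Ye j) * lam ^ (d - 1 - j)) d]
    apply Finset.sum_congr rfl
    intro j _
    simp [hXe, hYe, j.isLt]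
  have hR : ∀ lam : ℂ, ∑ t : Fin (d + 1), lam ^ (t:ℕ) * An t
      = ∑ p ∈ Finset.range (d + 1), Ae p * lam ^ p := by
    intro lam
    rw [← Fin.sum_univ_eq_sum_range (fun p => Ae p * lam ^ p) (d+1)]
    apply Finset.sum_congr rfl
    intro t _
    simp [hAe, t.isLt]
    rw [if_pos (Nat.lt_succ_iff.mp t.isLt)]
    ring
  have step1 : (∀ lam : ℂ, ∑ j : Fin d, (lam * Xn j + Yn j) * lam ^ (d - 1 - (j:ℕ))
      = ∑ t : Fin (d + 1), lam ^ (t:ℕ) * An t) ↔ (∀ p, p < d + 1 → Cf p = 0) := by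
    constructor
    · intro H
      apply extract
      intro lam
      have h1 := H lam
      rw [hL lam, key_sum, hR lam] at h1
      have h2 : ∑ p ∈ Finset.range (d+1), Cf p * lam ^ p
          = (∑ p ∈ Finset.range (d+1), ((if 1 ≤ p then Xe (d-p) else 0)
              + (if p < d then Ye (d-1-p) else 0)) * lam ^ p)
            - ∑ p ∈ Finset.range (d+1), Ae p * lam ^ p := by
        rw [← Finset.sum_sub_distrib]
        apply Finset.sum_congr rfl
        intros p _
        simp only [hCf]
        ring
      rw [h2, h1, sub_self]
    · intro H lam
      rw [hL lam, key_sum, hR lam]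
      apply Finset.sum_congr rfl
      intro p hp
      rw [Finset.mem_range] at hp
      have h3 := H p hp
      rw [hCf, sub_eq_zero] at h3
      rw [h3]
  rw [step1]
  have hx0 : Xe 0 = Xn ⟨0, hd⟩ := by simp only [hXe]; exact dif_pos hd
  have had : Ae d = An (Fin.last d) := by simp only [hAe]; exact dif_pos (Nat.lt_succ_self d)
  constructor
  · intro H
    constructor
    · have h4 := H d (by omega)
      rw [hCf, sub_eq_zero] at h4
      rw [if_pos hd, if_neg (by omega : ¬ d < d), add_zero, Nat.sub_self, hx0, had] at h4
      exact h4
    · intro j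
      have hjlt := j.isLt
      have h4 := H (d - 1 - (j:ℕ)) (by omega)
      rw [hCf, sub_eq_zero] at h4
      rw [if_pos (by omega : d - 1 - (j:ℕ) < d)] at h4
      have hy : Ye (d - 1 - (d - 1 - (j:ℕ))) = Yn j := by
        rw [show d - 1 - (d - 1 - (j:ℕ)) = (j:ℕ) from by omega]
        simp [hYe, hjlt]
      have ha : Ae (d - 1 - (j:ℕ)) = An ⟨d - 1 - (j:ℕ), by omega⟩ := by
        simp only [hAe]; exact dif_pos (by omega)
      rw [hy, ha] at h4
      have hx : (if 1 ≤ d - 1 - (j:ℕ) then Xe (d - (d - 1 - (j:ℕ))) else 0)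
          = (if h : (j:ℕ) + 1 < d then Xn ⟨(j:ℕ) + 1, h⟩ else 0) := by
        by_cases hc : (j:ℕ) + 1 < d
        · rw [if_pos (by omega : 1 ≤ d - 1 - (j:ℕ)), dif_pos hc,
            show d - (d - 1 - (j:ℕ)) = (j:ℕ) + 1 from by omega]
          simp only [hXe]; exact dif_pos hc
        · rw [if_neg (by omega : ¬ 1 ≤ d - 1 - (j:ℕ)), dif_neg hc]
      rw [hx] at h4
      rw [← h4]
      ring
  · rintro ⟨H1, H2⟩ p hp
    rw [hCf, sub_eq_zero]
    by_cases hpd : p = d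
    · rw [hpd]
      rw [if_pos hd, if_neg (by omega : ¬ d < d), add_zero, Nat.sub_self, hx0, had]
      exact H1
    · have hpd' : p < d := by omega
      have hlt : d - 1 - p < d := by omega
      rw [if_pos hpd']
      have e1 : Ye (d - 1 - p) = Yn ⟨d - 1 - p, hlt⟩ := by
        simp only [hYe]; rw [dif_pos hlt]
      have e2 : Ae p = An ⟨p, hp⟩ := by
        simp only [hAe]; rw [dif_pos hp]
      have e3 : (if 1 ≤ p then Xe (d - p) else 0)
          = (if h : (d - 1 - p : ℕ) + 1 < d then Xn ⟨d - 1 - p + 1, h⟩ else 0) := by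
        by_cases hc : 1 ≤ p
        · have hg : d - 1 - p + 1 < d := by omega
          rw [if_pos hc, dif_pos hg]
          simp only [hXe]
          rw [dif_pos (show d - p < d by omega)]
          congr 1
          exact Fin.ext (by simp; omega)
        · rw [if_neg hc, dif_neg (show ¬ (d - 1 - p + 1 < d) by omega)]
      rw [e1, e2, e3]
      have h5 := H2 ⟨d - 1 - p, hlt⟩
      have e4 : An ⟨d - 1 - ((⟨d - 1 - p, hlt⟩ : Fin d) : ℕ), by omega⟩ = An ⟨p, hp⟩ :=
        congrArg An (Fin.ext (by simp; omega))
      rw [e4] at h5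
      rw [h5]
      simp only [Fin.val_mk]
      ring

lemma lhs_entry {d n : ℕ} (X Y : Matrix (Fin d × Fin n) (Fin d × Fin n) ℂ)
    (lam : ℂ) (i : Fin d × Fin n) (c : Fin n) :
    ((lam • X + Y) * vKron (Lam d lam) (1 : Matrix (Fin n) (Fin n) ℂ)) i c
      = ∑ j : Fin d, (lam * X i (j, c) + Y i (j, c)) * lam ^ (d - 1 - (j : ℕ)) := by
  rw [Matrix.mul_apply, Fintype.sum_prod_type]
  apply Finset.sum_congr rfl
  intro j _
  rw [Finset.sum_eq_single c]
  · simp [vKron, Lam, Matrix.one_apply, Matrix.add_apply, Matrix.smul_apply, smul_eq_mul]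
  · intro b _ hb
    simp [vKron, Matrix.one_apply, hb]
  · intro hc
    exact absurd (Finset.mem_univ c) hc

lemma rhs_entry {d n : ℕ} (Pc : Fin (d + 1) → Matrix (Fin n) (Fin n) ℂ)
    (v : Fin d → ℂ) (lam : ℂ) (i : Fin d × Fin n) (c : Fin n) :
    vKron v (polyEval Pc lam) i c
      = ∑ t : Fin (d + 1), lam ^ (t : ℕ) * (v i.1 * Pc t i.2 c) := by
  simp [vKron, polyEval, Matrix.sum_apply, Matrix.smul_apply, smul_eq_mul, Finset.mul_sum]
  apply Finset.sum_congr rfl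
  intros; ring

lemma inL1_iff {d n : ℕ} (hd : 1 ≤ d) (Pc : Fin (d + 1) → Matrix (Fin n) (Fin n) ℂ)
    (X Y : Matrix (Fin d × Fin n) (Fin d × Fin n) ℂ) (v : Fin d → ℂ) :
    InL1 Pc X Y v ↔
      ((∀ (i : Fin d × Fin n) (c : Fin n),
          X i (⟨0, hd⟩, c) = v i.1 * Pc (Fin.last d) i.2 c) ∧
       (∀ (i : Fin d × Fin n) (j : Fin d) (c : Fin n),
          Y i (j, c) = v i.1 * Pc ⟨d - 1 - (j : ℕ), by omega⟩ i.2 c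
            - (if h : (j : ℕ) + 1 < d then X i (⟨(j : ℕ) + 1, h⟩, c) else 0))) := by
  have key : InL1 Pc X Y v ↔ ∀ (i : Fin d × Fin n) (c : Fin n),
      (∀ lam : ℂ, ∑ j : Fin d, (lam * X i (j, c) + Y i (j, c)) * lam ^ (d - 1 - (j : ℕ))
        = ∑ t : Fin (d + 1), lam ^ (t : ℕ) * (v i.1 * Pc t i.2 c)) := by
    constructor
    · intro H i c lam
      rw [← lhs_entry, ← rhs_entry, H lam]
    · intro H lam
      ext i c
      rw [lhs_entry, rhs_entry]
      exact H i c lam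
  rw [key]
  constructor
  · intro H
    constructor
    · intro i c
      exact ((seq_iff hd (fun j => X i (j, c)) (fun j => Y i (j, c))
        (fun t => v i.1 * Pc t i.2 c)).mp (H i c)).1
    · intro i j c
      exact ((seq_iff hd (fun j => X i (j, c)) (fun j => Y i (j, c))
        (fun t => v i.1 * Pc t i.2 c)).mp (H i c)).2 j
  · rintro ⟨H1, H2⟩ i c
    exact (seq_iff hd (fun j => X i (j, c)) (fun j => Y i (j, c))
      (fun t => v i.1 * Pc t i.2 c)).mpr ⟨H1 i c, fun j => H2 i j c⟩

/-- the `X` matrix determined by ansatz vector `v` and free parameter block `W`. -/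
def defX {d n : ℕ} (Pc : Fin (d + 1) → Matrix (Fin n) (Fin n) ℂ) (v : Fin d → ℂ)
    (W : Matrix (Fin d × Fin n) (Fin (d - 1) × Fin n) ℂ) :
    Matrix (Fin d × Fin n) (Fin d × Fin n) ℂ :=
  fun i jc => if h : (jc.1 : ℕ) = 0 then v i.1 * Pc (Fin.last d) i.2 jc.2
    else W i (⟨(jc.1 : ℕ) - 1, by have := jc.1.isLt; omega⟩, jc.2)

/-- the `Y` matrix determined by ansatz vector `v` and free parameter block `W`. -/
def defY {d n : ℕ} (Pc : Fin (d + 1) → Matrix (Fin n) (Fin n) ℂ) (v : Fin d → ℂ)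
    (W : Matrix (Fin d × Fin n) (Fin (d - 1) × Fin n) ℂ) :
    Matrix (Fin d × Fin n) (Fin d × Fin n) ℂ :=
  fun i jc => v i.1 * Pc ⟨d - 1 - (jc.1 : ℕ), by omega⟩ i.2 jc.2
    - (if h : (jc.1 : ℕ) + 1 < d then defX Pc v W i (⟨(jc.1 : ℕ) + 1, h⟩, jc.2) else 0)

/-- the free parameter block recovered from `X`. -/
def stripW {d n : ℕ} (X : Matrix (Fin d × Fin n) (Fin d × Fin n) ℂ) :
    Matrix (Fin d × Fin n) (Fin (d - 1) × Fin n) ℂ :=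
  fun i jc => X i (⟨(jc.1 : ℕ) + 1, by have := jc.1.isLt; omega⟩, jc.2)

lemma inL1_defXY {d n : ℕ} (hd : 1 ≤ d) (Pc : Fin (d + 1) → Matrix (Fin n) (Fin n) ℂ)
    (v : Fin d → ℂ) (W : Matrix (Fin d × Fin n) (Fin (d - 1) × Fin n) ℂ) :
    InL1 Pc (defX Pc v W) (defY Pc v W) v := by
  rw [inL1_iff hd]
  refine ⟨fun i c => dif_pos rfl, fun i j c => rfl⟩

lemma recover {d n : ℕ} (hd : 1 ≤ d) (Pc : Fin (d + 1) → Matrix (Fin n) (Fin n) ℂ)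
    (X Y : Matrix (Fin d × Fin n) (Fin d × Fin n) ℂ) (v : Fin d → ℂ) (h : InL1 Pc X Y v) :
    X = defX Pc v (stripW X) ∧ Y = defY Pc v (stripW X) := by
  obtain ⟨h1, h2⟩ := (inL1_iff hd Pc X Y v).mp h
  have hX : X = defX Pc v (stripW X) := by
    funext i jc
    obtain ⟨j, c⟩ := jc
    have key : ∀ (t : ℕ) (ht : t < d), t = (j : ℕ) → X i (⟨t, ht⟩, c) = X i (j, c) := by
      rintro t ht rfl
      rw [Fin.eta]
    by_cases hj : (j : ℕ) = 0
    · have hje : j = ⟨0, hd⟩ := Fin.ext hj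
      rw [hje, show defX Pc v (stripW X) i (⟨0, hd⟩, c)
        = v i.1 * Pc (Fin.last d) i.2 c from dif_pos rfl]
      exact h1 i c
    · rw [show defX Pc v (stripW X) i (j, c)
        = X i (⟨(j : ℕ) - 1 + 1, by have := j.isLt; omega⟩, c) from dif_neg hj]
      exact (key _ _ (by omega)).symm
  refine ⟨hX, ?_⟩
  funext i jc
  obtain ⟨j, c⟩ := jc
  show Y i (j, c) = defY Pc v (stripW X) i (j, c)
  simp only [defY, ← hX]
  exact h2 i j c

lemma defX_inj {d n : ℕ} (hd : 1 ≤ d) (hn : 1 ≤ n)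
    (Pc : Fin (d + 1) → Matrix (Fin n) (Fin n) ℂ) (hP : Pc (Fin.last d) ≠ 0)
    {v v' : Fin d → ℂ} {W W' : Matrix (Fin d × Fin n) (Fin (d - 1) × Fin n) ℂ}
    (h : defX Pc v W = defX Pc v' W') : v = v' ∧ W = W' := by
  obtain ⟨a, b, hab⟩ : ∃ a b, Pc (Fin.last d) a b ≠ 0 := by
    by_contra hc
    push_neg at hc
    exact hP (by ext a b; simpa using hc a b)
  constructor
  · funext i1
    have h0 := congrFun (congrFun h (i1, a)) (⟨0, hd⟩, b)
    rw [show defX Pc v W (i1, a) (⟨0, hd⟩, b) = v i1 * Pc (Fin.last d) a b from dif_pos rfl,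
      show defX Pc v' W' (i1, a) (⟨0, hd⟩, b) = v' i1 * Pc (Fin.last d) a b from dif_pos rfl] at h0
    exact mul_right_cancel₀ hab h0
  · funext i jc
    obtain ⟨j, c⟩ := jc
    have hj1 : ((j : ℕ) + 1) < d := by have := j.isLt; omega
    have h0 := congrFun (congrFun h i) ((⟨(j : ℕ) + 1, hj1⟩ : Fin d), c)
    rw [show defX Pc v W i ((⟨(j : ℕ) + 1, hj1⟩ : Fin d), c)
        = W i (⟨(j : ℕ) + 1 - 1, by have := j.isLt; omega⟩, c) from dif_neg (by simp),
      show defX Pc v' W' i ((⟨(j : ℕ) + 1, hj1⟩ : Fin d), c)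
        = W' i (⟨(j : ℕ) + 1 - 1, by have := j.isLt; omega⟩, c) from dif_neg (by simp)] at h0
    have key : ∀ (M : Matrix (Fin d × Fin n) (Fin (d - 1) × Fin n) ℂ)
        (t : ℕ) (ht : t < d - 1), t = (j : ℕ) → M i (⟨t, ht⟩, c) = M i (j, c) := by
      rintro M t ht rfl
      rw [Fin.eta]
    rw [key W _ _ (by omega), key W' _ _ (by omega)] at h0
    exact h0

lemma defX_add {d n : ℕ} (Pc : Fin (d + 1) → Matrix (Fin n) (Fin n) ℂ)
    (v v' : Fin d → ℂ) (W W' : Matrix (Fin d × Fin n) (Fin (d - 1) × Fin n) ℂ) :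
    defX Pc (v + v') (W + W') = defX Pc v W + defX Pc v' W' := by
  funext i jc
  simp only [defX, Matrix.add_apply, Pi.add_apply]
  split_ifs with hc
  · ring
  · rfl

lemma defX_smul {d n : ℕ} (Pc : Fin (d + 1) → Matrix (Fin n) (Fin n) ℂ) (a : ℂ)
    (v : Fin d → ℂ) (W : Matrix (Fin d × Fin n) (Fin (d - 1) × Fin n) ℂ) :
    defX Pc (a • v) (a • W) = a • defX Pc v W := by
  funext i jc
  simp only [defX, Matrix.smul_apply, Pi.smul_apply, smul_eq_mul]
  split_ifs with hc
  · ring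
  · rfl

lemma defY_add {d n : ℕ} (Pc : Fin (d + 1) → Matrix (Fin n) (Fin n) ℂ)
    (v v' : Fin d → ℂ) (W W' : Matrix (Fin d × Fin n) (Fin (d - 1) × Fin n) ℂ) :
    defY Pc (v + v') (W + W') = defY Pc v W + defY Pc v' W' := by
  funext i jc
  simp only [defY, defX_add, Matrix.add_apply, Pi.add_apply]
  split_ifs with hc
  · ring
  · ring

lemma defY_smul {d n : ℕ} (Pc : Fin (d + 1) → Matrix (Fin n) (Fin n) ℂ) (a : ℂ)
    (v : Fin d → ℂ) (W : Matrix (Fin d × Fin n) (Fin (d - 1) × Fin n) ℂ) :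
    defY Pc (a • v) (a • W) = a • defY Pc v W := by
  funext i jc
  simp only [defY, defX_smul, Matrix.smul_apply, Pi.smul_apply, smul_eq_mul]
  split_ifs with hc
  · ring
  · ring

lemma oKron_add {a b : ℕ} {α β : Type*} (v v' : Fin a → ℂ) (w : Fin b → ℂ)
    (M : Matrix α β ℂ) : oKron (v + v') w M = oKron v w M + oKron v' w M := by
  funext i j
  simp only [oKron, Matrix.add_apply, Pi.add_apply]
  ring

lemma oKron_smul {a b : ℕ} {α β : Type*} (x : ℂ) (v : Fin a → ℂ) (w : Fin b → ℂ)
    (M : Matrix α β ℂ) : oKron (x • v) w M = x • oKron v w M := by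
  funext i j
  simp only [oKron, Matrix.smul_apply, Pi.smul_apply, smul_eq_mul]
  ring

/-- the parametrization map. -/
def PhiFun {m k n r : ℕ} (Ac : Fin (m + 1) → Matrix (Fin n) (Fin n) ℂ)
    (Dc : Fin (k + 1) → Matrix (Fin r) (Fin r) ℂ)
    (B : Matrix (Fin n) (Fin r) ℂ) (C : Matrix (Fin r) (Fin n) ℂ)
    (q : ((Fin m → ℂ) × Matrix (Fin m × Fin n) (Fin (m - 1) × Fin n) ℂ) ×
         ((Fin k → ℂ) × Matrix (Fin k × Fin r) (Fin (k - 1) × Fin r) ℂ)) :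
    (Matrix ((Fin m × Fin n) ⊕ (Fin k × Fin r)) ((Fin m × Fin n) ⊕ (Fin k × Fin r)) ℂ ×
     Matrix ((Fin m × Fin n) ⊕ (Fin k × Fin r)) ((Fin m × Fin n) ⊕ (Fin k × Fin r)) ℂ) :=
  (Matrix.fromBlocks (defX Ac q.1.1 q.1.2) 0 0 (defX Dc q.2.1 q.2.2),
   Matrix.fromBlocks (defY Ac q.1.1 q.1.2) (-(oKron q.1.1 (eVec k (k - 1)) B))
     (oKron q.2.1 (eVec m (m - 1)) C) (defY Dc q.2.1 q.2.2))

lemma PhiFun_linear {m k n r : ℕ} (Ac : Fin (m + 1) → Matrix (Fin n) (Fin n) ℂ)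
    (Dc : Fin (k + 1) → Matrix (Fin r) (Fin r) ℂ)
    (B : Matrix (Fin n) (Fin r) ℂ) (C : Matrix (Fin r) (Fin n) ℂ) :
    IsLinearMap ℂ (PhiFun Ac Dc B C) := by
  constructor
  · rintro ⟨⟨v, W⟩, ⟨w, V⟩⟩ ⟨⟨v', W'⟩, ⟨w', V'⟩⟩
    simp only [PhiFun, Prod.mk_add_mk, Prod.mk.injEq]
    constructor
    · rw [defX_add, defX_add]
      simp [Matrix.fromBlocks_add]
    · rw [defY_add, defY_add, oKron_add, oKron_add]
      simp [Matrix.fromBlocks_add, neg_add]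
      abel
  · rintro a ⟨⟨v, W⟩, ⟨w, V⟩⟩
    simp only [PhiFun, Prod.smul_mk, Prod.mk.injEq]
    constructor
    · rw [defX_smul, defX_smul]
      simp [Matrix.fromBlocks_smul]
    · rw [defY_smul, defY_smul, oKron_smul, oKron_smul]
      simp [Matrix.fromBlocks_smul, smul_neg]

/-- with `A_m ≠ 0` and `D_k ≠ 0`, the set of pencils `(𝕏, 𝕐)` belonging to
`𝕃₁(G)` (for some ansatz vectors) is a `ℂ`-subspace of dimension
`m + m(m−1)n² + k + k(k−1)r²`. -/
theorem stmt3 {m k n r : ℕ} (hm : 1 ≤ m) (hk : 1 ≤ k) (hn : 1 ≤ n) (hr : 1 ≤ r)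
    (Ac : Fin (m + 1) → Matrix (Fin n) (Fin n) ℂ)
    (Dc : Fin (k + 1) → Matrix (Fin r) (Fin r) ℂ)
    (B : Matrix (Fin n) (Fin r) ℂ) (C : Matrix (Fin r) (Fin n) ℂ)
    (hA : Ac (Fin.last m) ≠ 0) (hD : Dc (Fin.last k) ≠ 0) :
    ∃ S : Submodule ℂ
        (Matrix ((Fin m × Fin n) ⊕ (Fin k × Fin r)) ((Fin m × Fin n) ⊕ (Fin k × Fin r)) ℂ ×
         Matrix ((Fin m × Fin n) ⊕ (Fin k × Fin r)) ((Fin m × Fin n) ⊕ (Fin k × Fin r)) ℂ),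
      (S : Set (Matrix ((Fin m × Fin n) ⊕ (Fin k × Fin r)) ((Fin m × Fin n) ⊕ (Fin k × Fin r)) ℂ ×
          Matrix ((Fin m × Fin n) ⊕ (Fin k × Fin r)) ((Fin m × Fin n) ⊕ (Fin k × Fin r)) ℂ))
          = {p | ∃ v w, InBL1 Ac Dc B C p.1 p.2 v w} ∧
      Module.finrank ℂ S = m + m * (m - 1) * n ^ 2 + k + k * (k - 1) * r ^ 2 := by
  classical
  set PhiL := IsLinearMap.mk' (PhiFun Ac Dc B C) (PhiFun_linear Ac Dc B C) with hPhiL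
  have hrange : Set.range (PhiFun Ac Dc B C) = {p | ∃ v w, InBL1 Ac Dc B C p.1 p.2 v w} := by
    ext p
    constructor
    · rintro ⟨⟨⟨v, W⟩, ⟨w, V⟩⟩, rfl⟩
      exact ⟨v, w, defX Ac v W, defY Ac v W, defX Dc w V, defY Dc w V,
        inL1_defXY hm Ac v W, inL1_defXY hk Dc w V, rfl, rfl⟩
    · rintro ⟨v, w, X, Y, P, Q, hXY, hPQ, h1, h2⟩
      refine ⟨((v, stripW X), (w, stripW P)), ?_⟩
      obtain ⟨hX, hY⟩ := recover hm Ac X Y v hXY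
      obtain ⟨hP, hQ⟩ := recover hk Dc P Q w hPQ
      have e1 : (PhiFun Ac Dc B C ((v, stripW X), (w, stripW P))).1 = p.1 := by
        show Matrix.fromBlocks (defX Ac v (stripW X)) 0 0 (defX Dc w (stripW P)) = p.1
        rw [h1, ← hX, ← hP]
      have e2 : (PhiFun Ac Dc B C ((v, stripW X), (w, stripW P))).2 = p.2 := by
        show Matrix.fromBlocks (defY Ac v (stripW X)) (-(oKron v (eVec k (k - 1)) B))
          (oKron w (eVec m (m - 1)) C) (defY Dc w (stripW P)) = p.2
        rw [h2, ← hY, ← hQ]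
      exact Prod.ext e1 e2
  have hinj : Function.Injective (PhiFun Ac Dc B C) := by
    rintro ⟨⟨v, W⟩, ⟨w, V⟩⟩ ⟨⟨v', W'⟩, ⟨w', V'⟩⟩ h
    have h1 := congrArg Prod.fst h
    have h2 := congrArg Prod.snd h
    simp only [PhiFun] at h1 h2
    have hXa : defX Ac v W = defX Ac v' W' := by
      have := congrArg Matrix.toBlocks₁₁ h1
      simpa [Matrix.toBlocks_fromBlocks₁₁] using this
    have hXd : defX Dc w V = defX Dc w' V' := by
      have := congrArg Matrix.toBlocks₂₂ h1
      simpa [Matrix.toBlocks_fromBlocks₂₂] using this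
    obtain ⟨hv, hW⟩ := defX_inj hm hn Ac hA hXa
    obtain ⟨hw, hV⟩ := defX_inj hk hr Dc hD hXd
    simp [hv, hW, hw, hV]
  refine ⟨LinearMap.range PhiL, ?_, ?_⟩
  · rw [LinearMap.coe_range]
    exact hrange
  · rw [LinearMap.finrank_range_of_inj hinj]
    rw [Module.finrank_prod, Module.finrank_prod, Module.finrank_prod]
    rw [Module.finrank_pi, Module.finrank_pi, Module.finrank_matrix, Module.finrank_matrix]
    simp only [Fintype.card_prod, Fintype.card_fin, Module.finrank_self]
    ring
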